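/- Let Δ > 0 and let ϱ : [0, ∞) → [0, ∞) be nonincreasing with convergent series μ := ϱ(0) + 2·Σ_{m=1}^∞ ϱ(mΔ). Let A = [A₁ A₂ … A_p] ∈ ℝ^{N×pq} be a horizontal concatenation of blocks A_i ∈ ℝ^{N×q}, where each block A_i has columns a_{i,1}, …, a_{i,q} satisfying |⟨a_{i,n}, a_{i,m}⟩| ≤ ϱ(|n − m|·Δ) for all n, m ∈ {1, …, q}. Then the spectral norm of A satisfies ‖A‖ ≤ √(p·μ). -/

import Mathlib

/-!
STATEMENT 15: Coherence bound for the spectral norm of a block-structured dictionary,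
the `k = 0` case: `‖A‖ ≤ √(p·μ)`.

`hcat A : Matrix (Fin N) (Fin p × Fin q) ℝ` is the horizontal concatenation `[A₁ … A_p]`;
the columns of the `i`-th block are `a_{i,m} = A i · m`, with Euclidean inner products
`⟨a_{i,n}, a_{i,m}⟩ = Σⱼ A i j n · A i j m`.  Spectral norms come from the scoped instances
of `Matrix.L2OpNorm`, and `Σ_{m=1}^∞ ϱ(mΔ)` is indexed by `m : ℕ` through `ϱ((m+1)·Δ)`.
-/

open scoped Matrix.Norms.L2Operator

/-- Horizontal (column-block) concatenation `[A₁ A₂ … A_p]`. -/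
def hcat {N p q : ℕ} (A : Fin p → Matrix (Fin N) (Fin q) ℝ) :
    Matrix (Fin N) (Fin p × Fin q) ℝ :=
  Matrix.of fun n ik => A ik.1 n ik.2

/-- Row-sum bound: each row sum of the correlation envelope is at most
`ϱ 0 + 2 Σ_{m≥1} ϱ(mΔ)`. -/
lemma coherence_rowsum {q : ℕ} (Δ : ℝ) (hΔ : 0 < Δ) (ϱ : ℝ → ℝ)
    (hϱ0 : ∀ s ∈ Set.Ici (0 : ℝ), 0 ≤ ϱ s)
    (hsum : Summable fun m : ℕ => ϱ ((m + 1) * Δ))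
    (n : Fin q) :
    ∑ m : Fin q, ϱ (|(n : ℝ) - (m : ℝ)| * Δ) ≤ ϱ 0 + 2 * ∑' m : ℕ, ϱ ((m + 1) * Δ) := by
  have hnonneg : ∀ m : ℕ, 0 ≤ ϱ ((m + 1) * Δ) := fun m =>
    hϱ0 _ (Set.mem_Ici.mpr (by positivity))
  have htail : ∀ K : ℕ, ∑ k ∈ Finset.range K, ϱ ((k + 1) * Δ) ≤ ∑' m : ℕ, ϱ ((m + 1) * Δ) :=
    fun K => Summable.sum_le_tsum _ (fun m _ => hnonneg m) hsum
  set n' := (n : ℕ) with hn'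
  have hnq : n' < q := n.isLt
  have hsplit : ∑ m : Fin q, ϱ (|(n : ℝ) - (m : ℝ)| * Δ)
      = ∑ m ∈ Finset.range q, ϱ (|(n' : ℝ) - (m : ℝ)| * Δ) :=
    Fin.sum_univ_eq_sum_range (fun m : ℕ => ϱ (|(n' : ℝ) - (m : ℝ)| * Δ)) q
  rw [hsplit]
  rw [Finset.range_eq_Ico, ← Finset.sum_Ico_consecutive _ (Nat.zero_le n') (le_of_lt hnq),
    Finset.sum_eq_sum_Ico_succ_bot hnq, ← Finset.range_eq_Ico]
  have h1 : ∑ m ∈ Finset.range n', ϱ (|(n' : ℝ) - (m : ℝ)| * Δ)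
      = ∑ k ∈ Finset.range n', ϱ ((k + 1) * Δ) := by
    rw [← Finset.sum_range_reflect]
    refine Finset.sum_congr rfl fun k hk => ?_
    rw [Finset.mem_range] at hk
    congr 1
    have : (↑(n' - 1 - k) : ℝ) = (n' : ℝ) - 1 - k := by
      push_cast [Nat.sub_sub]; rw [Nat.cast_sub (by omega)]; push_cast; ring
    rw [this, abs_of_nonneg (by linarith [Nat.one_le_iff_ne_zero.mpr (by omega : n' ≠ 0),
      (by exact_mod_cast Nat.lt_of_lt_of_le hk (le_refl n') : (k:ℝ) < n')])]
    ring
  have h2 : ∑ m ∈ Finset.Ico (n' + 1) q, ϱ (|(n' : ℝ) - (m : ℝ)| * Δ)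
      = ∑ k ∈ Finset.range (q - (n' + 1)), ϱ ((k + 1) * Δ) := by
    rw [Finset.sum_Ico_eq_sum_range]
    refine Finset.sum_congr rfl fun k hk => ?_
    congr 1
    have : (↑(n' + 1 + k) : ℝ) = (n' : ℝ) + 1 + k := by push_cast; ring
    rw [this, abs_sub_comm, abs_of_nonneg (by linarith)]
    ring
  have h0 : ϱ (|(n' : ℝ) - (n' : ℝ)| * Δ) = ϱ 0 := by norm_num
  rw [h1, h2, h0]
  have := htail n'
  have := htail (q - (n' + 1))
  linarith

/-- Quadratic-form bound for a single block. -/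
lemma coherence_block_bound {N q : ℕ} (Δ : ℝ) (hΔ : 0 < Δ) (ϱ : ℝ → ℝ)
    (hϱ0 : ∀ s ∈ Set.Ici (0 : ℝ), 0 ≤ ϱ s)
    (B : Matrix (Fin N) (Fin q) ℝ)
    (hcorr : ∀ (n m : Fin q),
      |∑ j, B j n * B j m| ≤ ϱ (|(n : ℝ) - (m : ℝ)| * Δ))
    (μ : ℝ) (hrow : ∀ n : Fin q, ∑ m : Fin q, ϱ (|(n : ℝ) - (m : ℝ)| * Δ) ≤ μ)
    (y : Fin q → ℝ) :
    ∑ j, (B.mulVec y j) ^ 2 ≤ μ * ∑ m, y m ^ 2 := by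
  have hϱnn : ∀ (n m : Fin q), 0 ≤ ϱ (|(n : ℝ) - (m : ℝ)| * Δ) := fun n m =>
    hϱ0 _ (Set.mem_Ici.mpr (by positivity))
  have h1 : ∑ j, (B.mulVec y j) ^ 2
      = ∑ n : Fin q, ∑ m : Fin q, (y n * y m) * ∑ j, B j n * B j m := by
    have hj : ∀ j, (B.mulVec y j) ^ 2
        = ∑ n : Fin q, ∑ m : Fin q, (y n * y m) * (B j n * B j m) := by
      intro j
      rw [Matrix.mulVec, dotProduct, sq, Finset.sum_mul_sum]
      exact Finset.sum_congr rfl fun n _ => Finset.sum_congr rfl fun m _ => by ring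
    rw [Finset.sum_congr rfl fun j _ => hj j]
    rw [Finset.sum_comm]
    refine Finset.sum_congr rfl fun n _ => ?_
    rw [Finset.sum_comm]
    refine Finset.sum_congr rfl fun m _ => ?_
    rw [Finset.mul_sum]
  have h2 : ∑ n : Fin q, ∑ m : Fin q, (y n * y m) * ∑ j, B j n * B j m
      ≤ ∑ n : Fin q, ∑ m : Fin q, ((y n ^ 2 + y m ^ 2) / 2) * ϱ (|(n : ℝ) - (m : ℝ)| * Δ) := by
    refine Finset.sum_le_sum fun n _ => Finset.sum_le_sum fun m _ => ?_
    have habs : (y n * y m) * ∑ j, B j n * B j m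
        ≤ |y n * y m| * ϱ (|(n : ℝ) - (m : ℝ)| * Δ) := by
      calc (y n * y m) * ∑ j, B j n * B j m ≤ |(y n * y m) * ∑ j, B j n * B j m| :=
            le_abs_self _
        _ = |y n * y m| * |∑ j, B j n * B j m| := abs_mul _ _
        _ ≤ |y n * y m| * ϱ (|(n : ℝ) - (m : ℝ)| * Δ) :=
            mul_le_mul_of_nonneg_left (hcorr n m) (abs_nonneg _)
    refine habs.trans (mul_le_mul_of_nonneg_right ?_ (hϱnn n m))
    rw [abs_mul]
    nlinarith [sq_nonneg (|y n| - |y m|), sq_abs (y n), sq_abs (y m), abs_nonneg (y n),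
      abs_nonneg (y m)]
  have h3 : ∑ n : Fin q, ∑ m : Fin q, ((y n ^ 2 + y m ^ 2) / 2) * ϱ (|(n : ℝ) - (m : ℝ)| * Δ)
      = ∑ n : Fin q, y n ^ 2 * ∑ m : Fin q, ϱ (|(n : ℝ) - (m : ℝ)| * Δ) := by
    have hsym : ∑ n : Fin q, ∑ m : Fin q, (y m ^ 2 / 2) * ϱ (|(n : ℝ) - (m : ℝ)| * Δ)
        = ∑ n : Fin q, ∑ m : Fin q, (y n ^ 2 / 2) * ϱ (|(n : ℝ) - (m : ℝ)| * Δ) := by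
      rw [Finset.sum_comm]
      exact Finset.sum_congr rfl fun n _ => Finset.sum_congr rfl fun m _ => by
        rw [abs_sub_comm]
    calc ∑ n : Fin q, ∑ m : Fin q, ((y n ^ 2 + y m ^ 2) / 2) * ϱ (|(n : ℝ) - (m : ℝ)| * Δ)
        = ∑ n : Fin q, ∑ m : Fin q, ((y n ^ 2 / 2) * ϱ (|(n : ℝ) - (m : ℝ)| * Δ)
            + (y m ^ 2 / 2) * ϱ (|(n : ℝ) - (m : ℝ)| * Δ)) := by
          exact Finset.sum_congr rfl fun n _ => Finset.sum_congr rfl fun m _ => by ring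
      _ = ∑ n : Fin q, ∑ m : Fin q, (y n ^ 2 / 2) * ϱ (|(n : ℝ) - (m : ℝ)| * Δ)
            + ∑ n : Fin q, ∑ m : Fin q, (y m ^ 2 / 2) * ϱ (|(n : ℝ) - (m : ℝ)| * Δ) := by
          rw [← Finset.sum_add_distrib]
          exact Finset.sum_congr rfl fun n _ => by rw [← Finset.sum_add_distrib]
      _ = 2 * ∑ n : Fin q, ∑ m : Fin q, (y n ^ 2 / 2) * ϱ (|(n : ℝ) - (m : ℝ)| * Δ) := by
          rw [hsym]; ring
      _ = ∑ n : Fin q, y n ^ 2 * ∑ m : Fin q, ϱ (|(n : ℝ) - (m : ℝ)| * Δ) := by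
          rw [Finset.mul_sum]
          exact Finset.sum_congr rfl fun n _ => by
            rw [Finset.mul_sum, Finset.mul_sum]
            exact Finset.sum_congr rfl fun m _ => by ring
  have h4 : ∑ n : Fin q, y n ^ 2 * ∑ m : Fin q, ϱ (|(n : ℝ) - (m : ℝ)| * Δ)
      ≤ ∑ n : Fin q, y n ^ 2 * μ :=
    Finset.sum_le_sum fun n _ => mul_le_mul_of_nonneg_left (hrow n) (sq_nonneg _)
  calc ∑ j, (B.mulVec y j) ^ 2 = _ := h1
    _ ≤ _ := h2
    _ = _ := h3
    _ ≤ ∑ n : Fin q, y n ^ 2 * μ := h4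
    _ = μ * ∑ m, y m ^ 2 := by rw [← Finset.sum_mul]; ring

theorem coherence_bound_dictionary
    {N p q : ℕ} (Δ : ℝ) (hΔ : 0 < Δ)
    (ϱ : ℝ → ℝ)
    (hϱ0 : ∀ s ∈ Set.Ici (0 : ℝ), 0 ≤ ϱ s)
    (hϱanti : AntitoneOn ϱ (Set.Ici (0 : ℝ)))
    (hsum : Summable fun m : ℕ => ϱ ((m + 1) * Δ))
    (μ : ℝ) (hμ : μ = ϱ 0 + 2 * ∑' m : ℕ, ϱ ((m + 1) * Δ))
    (A : Fin p → Matrix (Fin N) (Fin q) ℝ)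
    (hcorr : ∀ (i : Fin p) (n m : Fin q),
      |∑ j, A i j n * A i j m| ≤ ϱ (|(n : ℝ) - (m : ℝ)| * Δ)) :
    ‖hcat A‖ ≤ Real.sqrt (p * μ) := by
  have hμnn : 0 ≤ μ := by
    rw [hμ]
    have h0 : 0 ≤ ϱ 0 := hϱ0 0 (Set.mem_Ici.mpr le_rfl)
    have ht : 0 ≤ ∑' m : ℕ, ϱ ((m + 1) * Δ) :=
      tsum_nonneg fun m => hϱ0 _ (Set.mem_Ici.mpr (by positivity))
    linarith
  have hblock : ∀ (i : Fin p) (y : Fin q → ℝ),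
      ∑ j, ((A i).mulVec y j) ^ 2 ≤ μ * ∑ m, y m ^ 2 := by
    intro i y
    refine coherence_block_bound Δ hΔ ϱ hϱ0 (A i) (hcorr i) μ ?_ y
    intro n
    rw [hμ]
    exact coherence_rowsum Δ hΔ ϱ hϱ0 hsum n
  rw [Matrix.l2_opNorm_def]
  refine ContinuousLinearMap.opNorm_le_bound _ (Real.sqrt_nonneg _) fun x => ?_
  simp only [LinearEquiv.trans_apply, LinearMap.coe_toContinuousLinearMap']
  set w : Fin p → EuclideanSpace ℝ (Fin N) :=
    fun i => (WithLp.equiv 2 (Fin N → ℝ)).symm ((A i).mulVec fun m => x (i, m)) with hw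
  have heq : Matrix.toEuclideanLin (hcat A) x = ∑ i, w i := by
    ext j
    have hsum : (∑ i, w i) j = ∑ i, w i j := by
      rw [WithLp.ofLp_sum]; exact Finset.sum_apply j Finset.univ _
    rw [hsum]
    simp only [hw, Matrix.toEuclideanLin_apply, hcat, Matrix.mulVec, dotProduct,
      WithLp.equiv_symm_apply, WithLp.ofLp_toLp, Matrix.of_apply,
      Fintype.sum_prod_type]
  rw [heq]
  set c : Fin p → ℝ := fun i => Real.sqrt (∑ m, x (i, m) ^ 2) with hc
  have hcnn : ∀ i, 0 ≤ c i := fun i => Real.sqrt_nonneg _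
  have hwn : ∀ i, ‖w i‖ ≤ Real.sqrt μ * c i := by
    intro i
    have h1 : ‖w i‖ = Real.sqrt (∑ j, ((A i).mulVec fun m => x (i, m)) j ^ 2) := by
      rw [EuclideanSpace.norm_eq]
      congr 1
      exact Finset.sum_congr rfl fun j _ => by
        rw [Real.norm_eq_abs, sq_abs]; rfl
    rw [h1, hc, ← Real.sqrt_mul hμnn]
    exact Real.sqrt_le_sqrt (hblock i _)
  have hxnorm : ‖x‖ = Real.sqrt (∑ i, ∑ m, x (i, m) ^ 2) := by
    rw [EuclideanSpace.norm_eq]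
    congr 1
    rw [show (∑ ik : Fin p × Fin q, ‖x ik‖ ^ 2) = ∑ ik : Fin p × Fin q, x ik ^ 2 from
      Finset.sum_congr rfl fun ik _ => by rw [Real.norm_eq_abs, sq_abs]]
    exact Fintype.sum_prod_type _
  have hcs : ∑ i, c i ≤ Real.sqrt p * ‖x‖ := by
    have h2 : (∑ i, c i) ^ 2 ≤ (p : ℝ) * ∑ i, (c i) ^ 2 := by
      have := sq_sum_le_card_mul_sum_sq (s := (Finset.univ : Finset (Fin p))) (f := c)
      simpa using this
    have h3 : ∑ i, (c i) ^ 2 = ∑ i, ∑ m, x (i, m) ^ 2 :=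
      Finset.sum_congr rfl fun i _ => Real.sq_sqrt (Finset.sum_nonneg fun m _ => sq_nonneg _)
    have h4 : ∑ i, c i = Real.sqrt ((∑ i, c i) ^ 2) :=
      (Real.sqrt_sq (Finset.sum_nonneg fun i _ => hcnn i)).symm
    rw [h4, hxnorm, ← Real.sqrt_mul (by positivity)]
    refine Real.sqrt_le_sqrt ?_
    rw [← h3]; exact h2
  calc ‖∑ i, w i‖ ≤ ∑ i, ‖w i‖ := norm_sum_le _ _
    _ ≤ ∑ i, Real.sqrt μ * c i := Finset.sum_le_sum fun i _ => hwn i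
    _ = Real.sqrt μ * ∑ i, c i := by rw [Finset.mul_sum]
    _ ≤ Real.sqrt μ * (Real.sqrt p * ‖x‖) :=
        mul_le_mul_of_nonneg_left hcs (Real.sqrt_nonneg _)
    _ = Real.sqrt (p * μ) * ‖x‖ := by
        rw [Real.sqrt_mul (by positivity : (0:ℝ) ≤ (p:ℝ))]; ring
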